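/- Assume X satisfies UDP(S₀, κ₀, Δ) with 0 < κ₀ < 1/4, ‖X^⊤ε‖_∞ ≤ λ⁰, and λ_d > λ⁰/(1−4κ₀). Then for every s ≤ S₀ and subset S with |S| = s, the Dantzig selector β^d satisfies ‖Xβ^d − Xβ*‖₂ ≤ 4λ_d Δ√s + ‖β*_{S^c}‖₁/(Δ√s). -/
import Mathlib


open Finset Matrix

/-- The ℓ¹ norm of a vector. -/
noncomputable def l1 {p : ℕ} (v : Fin p → ℝ) : ℝ := ∑ i, |v i|

/-- The ℓ² norm of a vector. -/
noncomputable def l2 {n : ℕ} (v : Fin n → ℝ) : ℝ := Real.sqrt (∑ i, (v i) ^ 2)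

/-- Restriction of a vector to a set of coordinates (zero elsewhere). -/
def restr {p : ℕ} (v : Fin p → ℝ) (S : Finset (Fin p)) : Fin p → ℝ :=
  fun i => if i ∈ S then v i else 0

/-- The Universal Distortion Property UDP(S₀, κ₀, Δ). -/
def UDP {n p : ℕ} (X : Matrix (Fin n) (Fin p) ℝ) (S₀ κ₀ Δ : ℝ) : Prop :=
  ∀ γ : Fin p → ℝ, ∀ s : ℕ, 1 ≤ s → (s : ℝ) ≤ S₀ →
    ∀ S : Finset (Fin p), S.card = s →
      l1 (restr γ S) ≤ Δ * Real.sqrt s * l2 (X.mulVec γ) + κ₀ * l1 γ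

lemma l1_restr_eq {p : ℕ} (v : Fin p → ℝ) (S : Finset (Fin p)) :
    l1 (restr v S) = ∑ i ∈ S, |v i| := by
  simp only [l1, restr, apply_ite abs, abs_zero]
  rw [Finset.sum_ite_mem, Finset.univ_inter]

lemma l1_nonneg {p : ℕ} (v : Fin p → ℝ) : 0 ≤ l1 v :=
  Finset.sum_nonneg fun i _ => abs_nonneg _

set_option maxHeartbeats 1600000 in
/-- Oracle inequality in prediction error for the Dantzig selector under UDP
(de Castro, Thm 2.5). -/
theorem stmt_10 (n p : ℕ) (X : Matrix (Fin n) (Fin p) ℝ)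
    (S₀ κ₀ Δ : ℝ) (hκ₀ : 0 < κ₀ ∧ κ₀ < 1/4) (hΔ : 0 < Δ) (hudp : UDP X S₀ κ₀ Δ)
    (βstar βd : Fin p → ℝ) (ε y : Fin n → ℝ) (lamd lam0 : ℝ)
    (hy : y = X.mulVec βstar + ε)
    (hnoise : ∀ j, |Xᵀ.mulVec ε j| ≤ lam0) (hlam0 : 0 ≤ lam0)
    (hlam : lamd > lam0 / (1 - 4 * κ₀))
    (hfeas : ∀ j, |Xᵀ.mulVec (y - X.mulVec βd) j| ≤ lamd)
    (hmin : ∀ β : Fin p → ℝ, (∀ j, |Xᵀ.mulVec (y - X.mulVec β) j| ≤ lamd) →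
      l1 βd ≤ l1 β) :
    ∀ s : ℕ, 1 ≤ s → (s : ℝ) ≤ S₀ → ∀ S : Finset (Fin p), S.card = s →
      l2 (X.mulVec βd - X.mulVec βstar)
        ≤ 4 * lamd * Δ * Real.sqrt s + l1 (restr βstar Sᶜ) / (Δ * Real.sqrt s) := by
  obtain ⟨hκpos, hκlt⟩ := hκ₀
  intro s hs1 hsS S hScard
  have h14 : 0 < 1 - 4 * κ₀ := by linarith
  have hlamdpos : 0 < lamd := lt_of_le_of_lt (div_nonneg hlam0 h14.le) hlam
  have hlam0le : lam0 ≤ (1 - 4 * κ₀) * lamd := by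
    have := (div_lt_iff₀ h14).mp hlam
    linarith
  have hspos : (0:ℝ) < Real.sqrt s := by
    apply Real.sqrt_pos.mpr
    exact_mod_cast Nat.lt_of_lt_of_le Nat.zero_lt_one hs1
  set a : ℝ := Δ * Real.sqrt s with ha_def
  have hapos : 0 < a := mul_pos hΔ hspos
  set γ : Fin p → ℝ := βd - βstar with hγdef
  have hmv : X.mulVec βd - X.mulVec βstar = X.mulVec γ := by
    rw [hγdef, Matrix.mulVec_sub]
  set h : ℝ := l2 (X.mulVec βd - X.mulVec βstar) with hh_def
  have hhnn : 0 ≤ h := Real.sqrt_nonneg _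
  set R : ℝ := l1 (restr βstar Sᶜ) with hR_def
  have hRnn : 0 ≤ R := l1_nonneg _
  -- βstar is feasible
  have hfs : ∀ j, |Xᵀ.mulVec (y - X.mulVec βstar) j| ≤ lamd := by
    intro j
    have he : y - X.mulVec βstar = ε := by rw [hy]; abel
    rw [he]
    exact le_trans (hnoise j) (by nlinarith)
  have hl1d : l1 βd ≤ l1 βstar := hmin βstar hfs
  -- Gram bound
  have hu : ∀ j, |Xᵀ.mulVec (X.mulVec γ) j| ≤ lamd + lam0 := by
    intro j
    have e : X.mulVec γ = ε - (y - X.mulVec βd) := by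
      rw [← hmv, hy]; abel
    rw [e, Matrix.mulVec_sub]
    have h1 : |Xᵀ.mulVec ε j - Xᵀ.mulVec (y - X.mulVec βd) j| ≤
        |Xᵀ.mulVec ε j| + |Xᵀ.mulVec (y - X.mulVec βd) j| := abs_sub _ _
    have := hnoise j
    have := hfeas j
    simp only [Pi.sub_apply]
    linarith
  -- quadratic bound : h^2 ≤ (lamd + lam0) * l1 γ
  have hsq2 : h ^ 2 ≤ (lamd + lam0) * l1 γ := by
    have h2 : h ^ 2 = ∑ i, (X.mulVec γ i) ^ 2 := by
      rw [hh_def, hmv, l2, Real.sq_sqrt]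
      positivity
    have h3 : ∑ i, (X.mulVec γ i) ^ 2 = Xᵀ.mulVec (X.mulVec γ) ⬝ᵥ γ := by
      rw [Matrix.mulVec_transpose, ← Matrix.dotProduct_mulVec]
      simp [dotProduct, sq]
    rw [h2, h3]
    calc Xᵀ.mulVec (X.mulVec γ) ⬝ᵥ γ = ∑ i, Xᵀ.mulVec (X.mulVec γ) i * γ i := rfl
      _ ≤ ∑ i, (lamd + lam0) * |γ i| := by
          apply Finset.sum_le_sum
          intro i _
          calc Xᵀ.mulVec (X.mulVec γ) i * γ i ≤ |Xᵀ.mulVec (X.mulVec γ) i * γ i| :=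
                le_abs_self _
            _ = |Xᵀ.mulVec (X.mulVec γ) i| * |γ i| := abs_mul _ _
            _ ≤ (lamd + lam0) * |γ i| :=
                mul_le_mul_of_nonneg_right (hu i) (abs_nonneg _)
      _ = (lamd + lam0) * l1 γ := by rw [l1, Finset.mul_sum]
  -- cone condition
  have hsplit : ∀ v : Fin p → ℝ, l1 v = (∑ i ∈ S, |v i|) + ∑ i ∈ Sᶜ, |v i| := by
    intro v
    rw [l1, ← Finset.sum_add_sum_compl S]
  have hsum1 : ∑ i ∈ S, (|βstar i| - |γ i|) ≤ ∑ i ∈ S, |βd i| := by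
    apply Finset.sum_le_sum
    intro i _
    have h1 : |βstar i| - |βd i| ≤ |βstar i - βd i| := abs_sub_abs_le_abs_sub _ _
    have h2 : |βstar i - βd i| = |γ i| := by
      rw [hγdef]; simp [abs_sub_comm]
    linarith
  have hsum2 : ∑ i ∈ Sᶜ, (|γ i| - |βstar i|) ≤ ∑ i ∈ Sᶜ, |βd i| := by
    apply Finset.sum_le_sum
    intro i _
    have h1 : |γ i| ≤ |βd i| + |βstar i| := by
      rw [hγdef]; exact abs_sub _ _
    linarith
  rw [Finset.sum_sub_distrib] at hsum1 hsum2
  have hγcone : l1 γ ≤ 2 * l1 (restr γ S) + 2 * R := by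
    have e1 := hsplit βstar
    have e2 := hsplit βd
    have e3 := hsplit γ
    rw [hR_def, l1_restr_eq, l1_restr_eq]
    linarith
  -- UDP
  have hUD := hudp γ s hs1 hsS S hScard
  rw [← hmv, ← hh_def, ← ha_def] at hUD
  have hγnn : 0 ≤ l1 γ := l1_nonneg _
  have hγbound : (1 - 2 * κ₀) * l1 γ ≤ 2 * a * h + 2 * R := by
    rw [l1_restr_eq] at hγcone hUD
    nlinarith
  -- key quadratic inequality
  have hkey : h ^ 2 ≤ 4 * lamd * a * h + 4 * lamd * R := by
    have c1 : (lamd + lam0) * ((1 - 2 * κ₀) * l1 γ) ≤ (lamd + lam0) * (2 * a * h + 2 * R) :=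
      mul_le_mul_of_nonneg_left hγbound (by linarith)
    have c2 : lamd + lam0 ≤ 2 * (1 - 2 * κ₀) * lamd := by linarith
    have hahR : 0 ≤ 2 * a * h + 2 * R := by positivity
    nlinarith [mul_le_mul_of_nonneg_right c2 hahR]
  -- conclude
  clear_value a h R
  have hgoal : h ≤ 4 * lamd * a + R / a := by
    by_contra hcon
    push_neg at hcon
    have hBnn : 0 ≤ 4 * lamd * a + R / a := by positivity
    have hhpos : 0 < h := lt_of_le_of_lt hBnn hcon
    have h4 : 4 * lamd * a ≤ h := by
      have : 0 ≤ R / a := by positivity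
      linarith
    have h5 : 4 * lamd * R ≤ (R / a) * h := by
      have : (R / a) * (4 * lamd * a) ≤ (R / a) * h :=
        mul_le_mul_of_nonneg_left h4 (by positivity)
      have hane : a ≠ 0 := ne_of_gt hapos
      have e : (R / a) * (4 * lamd * a) = 4 * lamd * R := by
        rw [div_mul_eq_mul_div, mul_div_assoc, mul_div_assoc, div_self hane]
        ring
      linarith
    have h6 : h * h ≤ (4 * lamd * a + R / a) * h := by
      have := pow_two h
      linarith [hkey, h5]
    have h7 : (4 * lamd * a + R / a) * h < h * h :=
      mul_lt_mul_of_pos_right hcon hhpos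
    linarith
  calc h ≤ 4 * lamd * a + R / a := hgoal
    _ = 4 * lamd * Δ * Real.sqrt s + R / a := by rw [ha_def]; ring
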